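/- Let s > 0 and fix a nonnegative integer n. For real τ in a punctured neighborhood of e^{(2n+1)s} (with τ > e^s, τ ≠ e^{(2k+1)s} for all k), define K₀(τ) = (∑_{k=0}^∞ (2k+1)/(e^{(2k+1)s} − τ)) / (∑_{k=0}^∞ 1/(e^{(2k+1)s} − τ)) whenever the denominator is nonzero, and A(τ) = (2n + 1 − K₀(τ))/(e^{(2n+1)s} − τ). Then A(τ) has a finite limit as τ → e^{(2n+1)s}; in particular the apparent singularity of A at τ = e^{(2n+1)s} is removable. -/

import Mathlib

open Filter

theorem removable_singularity_of_An (s : ℝ) (hs : 0 < s) (n : ℕ) :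
    ∃ L : ℝ, Filter.Tendsto
      (fun τ : ℝ =>
        (2 * (n : ℝ) + 1 -
            (∑' k : ℕ, (2 * (k : ℝ) + 1) / (Real.exp ((2 * k + 1) * s) - τ)) /
              (∑' k : ℕ, 1 / (Real.exp ((2 * k + 1) * s) - τ))) /
          (Real.exp ((2 * n + 1) * s) - τ))
      (nhdsWithin (Real.exp ((2 * n + 1) * s))
        {τ : ℝ | Real.exp s < τ ∧ (∀ k : ℕ, τ ≠ Real.exp ((2 * k + 1) * s)) ∧
          (∑' k : ℕ, 1 / (Real.exp ((2 * k + 1) * s) - τ)) ≠ 0})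
      (nhds L) := by
  set ρ : ℝ := Real.exp (-(2 * s)) with hρdef
  have hρ0 : 0 < ρ := Real.exp_pos _
  have hρ1 : ρ < 1 := Real.exp_lt_one_iff.mpr (by linarith)
  set c : ℝ := (1 - ρ) / 2 with hcdef
  have hc : 0 < c := by simp only [hcdef]; linarith
  have hEpos : ∀ k : ℕ, 0 < Real.exp ((2 * k + 1) * s) := fun k => Real.exp_pos _
  set δ : ℝ := c * Real.exp ((2 * n + 1) * s) with hδdef
  have hδ : 0 < δ := mul_pos hc (hEpos n)
  set B : Set ℝ := Metric.closedBall (Real.exp ((2 * n + 1) * s)) δ with hBdef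
  have hB : B ∈ nhds (Real.exp ((2 * n + 1) * s)) := Metric.closedBall_mem_nhds _ hδ
  -- monotonicity facts
  have hlt : ∀ k : ℕ, k < n →
      Real.exp ((2 * k + 1) * s) ≤ ρ * Real.exp ((2 * n + 1) * s) := by
    intro k hk
    rw [hρdef, ← Real.exp_add]
    apply Real.exp_le_exp.mpr
    have hk' : (k : ℝ) + 1 ≤ n := by exact_mod_cast hk
    nlinarith
  have hgt : ∀ k : ℕ, n < k →
      Real.exp ((2 * n + 1) * s) ≤ ρ * Real.exp ((2 * k + 1) * s) := by
    intro k hk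
    rw [hρdef, ← Real.exp_add]
    apply Real.exp_le_exp.mpr
    have hk' : (n : ℝ) + 1 ≤ k := by exact_mod_cast hk
    nlinarith
  -- key uniform lower bound on the distance to the poles, for k ≠ n, on B
  have key : ∀ τ ∈ B, ∀ k : ℕ, k ≠ n →
      c * Real.exp ((2 * k + 1) * s) ≤ |Real.exp ((2 * k + 1) * s) - τ| := by
    intro τ hτ k hk
    rw [hBdef, Metric.mem_closedBall, Real.dist_eq, abs_le] at hτ
    obtain ⟨h1, h2⟩ := hτ
    rw [hδdef] at h1 h2
    have hρc : ρ = 1 - 2 * c := by rw [hcdef]; ring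
    have e1 := hEpos k
    have e2 := hEpos n
    rcases lt_or_gt_of_ne hk with h | h
    · have h3 := hlt k h
      rw [hρc] at h3
      have hEkn : Real.exp ((2 * k + 1) * s) ≤ Real.exp ((2 * n + 1) * s) := by
        nlinarith [mul_pos hc e2]
      have hint := mul_le_mul_of_nonneg_left hEkn hc.le
      have h4 : c * Real.exp ((2 * k + 1) * s) ≤ τ - Real.exp ((2 * k + 1) * s) := by
        nlinarith
      calc c * Real.exp ((2 * k + 1) * s) ≤ τ - Real.exp ((2 * k + 1) * s) := h4
        _ ≤ |Real.exp ((2 * k + 1) * s) - τ| := by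
            rw [abs_sub_comm]; exact le_abs_self _
    · have h3 := hgt k h
      rw [hρc] at h3
      have hEnk : Real.exp ((2 * n + 1) * s) ≤ Real.exp ((2 * k + 1) * s) := by
        nlinarith [mul_pos hc e1]
      have hint := mul_le_mul_of_nonneg_left hEnk hc.le
      have h4 : c * Real.exp ((2 * k + 1) * s) ≤ Real.exp ((2 * k + 1) * s) - τ := by
        nlinarith
      exact h4.trans (le_abs_self _)
  have hne : ∀ τ ∈ B, ∀ k : ℕ, k ≠ n → Real.exp ((2 * k + 1) * s) - τ ≠ 0 := by
    intro τ hτ k hk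
    have := key τ hτ k hk
    have h0 : 0 < |Real.exp ((2 * k + 1) * s) - τ| :=
      lt_of_lt_of_le (mul_pos hc (hEpos k)) this
    exact abs_pos.mp h0
  -- the summable majorant
  set u : ℕ → ℝ := fun k => (2 * n + 2 * k + 2) / (c * Real.exp ((2 * k + 1) * s)) with hudef
  have hgeom : Summable (fun k : ℕ => ρ ^ k) := summable_geometric_of_lt_one hρ0.le hρ1
  have hgeom' : Summable (fun k : ℕ => (k : ℝ) * ρ ^ k) := by
    have := summable_pow_mul_geometric_of_norm_lt_one (R := ℝ) 1
      (r := ρ) (by rwa [Real.norm_eq_abs, abs_of_pos hρ0])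
    simpa using this
  have hinv : ∀ k : ℕ, Real.exp ((2 * k + 1) * s) * (Real.exp (-s) * ρ ^ k) = 1 := by
    intro k
    rw [hρdef, ← Real.exp_nat_mul, ← Real.exp_add, ← Real.exp_add]
    rw [show (2 * (k : ℝ) + 1) * s + (-s + (k : ℝ) * -(2 * s)) = 0 by ring, Real.exp_zero]
  have hu : Summable u := by
    apply Summable.congr (f := fun k : ℕ =>
      ((2 * n + 2) / c * Real.exp (-s)) * ρ ^ k + (2 / c * Real.exp (-s)) * ((k : ℝ) * ρ ^ k))
    · exact (hgeom.mul_left _).add (hgeom'.mul_left _)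
    · intro k
      have h4 := hinv k
      have e1 := (hEpos k).ne'
      simp only [hudef]
      have h5 := eq_inv_of_mul_eq_one_right h4
      calc _ = (2 * n + 2 * k + 2) / c * (Real.exp (-s) * ρ ^ k) := by ring
        _ = _ := by rw [h5]; ring
  have hupos : ∀ k : ℕ, 0 ≤ u k := by
    intro k
    simp only [hudef]
    positivity
  -- bounds for the two series of interest
  have hboundN : ∀ k : ℕ, ∀ τ ∈ B,
      ‖(2 * (n : ℝ) - 2 * k) / (Real.exp ((2 * k + 1) * s) - τ)‖ ≤ u k := by
    intro k τ hτ
    rcases eq_or_ne k n with rfl | hk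
    · simp only [sub_self, zero_div, norm_zero]
      exact hupos k
    · have hk' := key τ hτ k hk
      have h5 : |2 * (n : ℝ) - 2 * k| ≤ 2 * n + 2 * k + 2 := by
        rw [abs_le]
        constructor <;> [skip; skip] <;>
          · have : (0:ℝ) ≤ n := Nat.cast_nonneg n
            have : (0:ℝ) ≤ k := Nat.cast_nonneg k
            linarith
      calc ‖(2 * (n : ℝ) - 2 * k) / (Real.exp ((2 * k + 1) * s) - τ)‖
          = |2 * (n : ℝ) - 2 * k| / |Real.exp ((2 * k + 1) * s) - τ| := by
            rw [norm_div, Real.norm_eq_abs, Real.norm_eq_abs]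
        _ ≤ (2 * n + 2 * k + 2) / (c * Real.exp ((2 * k + 1) * s)) :=
            div_le_div₀ (by positivity) h5 (by positivity) hk'
        _ = u k := rfl
  have hboundM : ∀ k : ℕ, ∀ τ ∈ B,
      ‖(if k = n then (0:ℝ) else 1 / (Real.exp ((2 * k + 1) * s) - τ))‖ ≤ u k := by
    intro k τ hτ
    rcases eq_or_ne k n with rfl | hk
    · rw [if_pos rfl, norm_zero]
      exact hupos k
    · rw [if_neg hk]
      have hk' := key τ hτ k hk
      have h5 : |(1:ℝ)| ≤ 2 * n + 2 * k + 2 := by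
        rw [abs_one]
        have : (0:ℝ) ≤ n := Nat.cast_nonneg n
        have : (0:ℝ) ≤ k := Nat.cast_nonneg k
        linarith
      calc ‖(1:ℝ) / (Real.exp ((2 * k + 1) * s) - τ)‖
          = |(1:ℝ)| / |Real.exp ((2 * k + 1) * s) - τ| := by
            rw [norm_div, Real.norm_eq_abs, Real.norm_eq_abs]
        _ ≤ (2 * n + 2 * k + 2) / (c * Real.exp ((2 * k + 1) * s)) :=
            div_le_div₀ (by positivity) h5 (by positivity) hk'
        _ = u k := rfl
  -- the two auxiliary functions
  set Nf : ℝ → ℝ := fun τ => ∑' k : ℕ, (2 * (n : ℝ) - 2 * k) / (Real.exp ((2 * k + 1) * s) - τ)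
    with hNfdef
  set Mf : ℝ → ℝ := fun τ => ∑' k : ℕ,
      (if k = n then (0:ℝ) else 1 / (Real.exp ((2 * k + 1) * s) - τ)) with hMfdef
  have hNc : ContinuousOn Nf B := by
    apply continuousOn_tsum (u := u) _ hu (fun k τ hτ => hboundN k τ hτ)
    intro k
    rcases eq_or_ne k n with rfl | hk
    · simp only [sub_self, zero_div]
      exact continuousOn_const
    · exact ContinuousOn.div continuousOn_const
        ((continuous_const.sub continuous_id).continuousOn)
        (fun τ hτ => hne τ hτ k hk)
  have hMc : ContinuousOn Mf B := by
    apply continuousOn_tsum (u := u) _ hu (fun k τ hτ => hboundM k τ hτ)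
    intro k
    rcases eq_or_ne k n with rfl | hk
    · have h7 : (fun τ : ℝ => if k = k then (0:ℝ)
          else 1 / (Real.exp ((2 * (k:ℕ) + 1) * s) - τ)) = fun _ => (0:ℝ) := by
        funext τ; rw [if_pos rfl]
      rw [h7]
      exact continuousOn_const
    · simp only [if_neg hk]
      exact ContinuousOn.div continuousOn_const
        ((continuous_const.sub continuous_id).continuousOn)
        (fun τ hτ => hne τ hτ k hk)
  -- limits
  have hNt : Tendsto Nf (nhds (Real.exp ((2 * n + 1) * s)))
      (nhds (Nf (Real.exp ((2 * n + 1) * s)))) := hNc.continuousAt hB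
  have hMt : Tendsto Mf (nhds (Real.exp ((2 * n + 1) * s)))
      (nhds (Mf (Real.exp ((2 * n + 1) * s)))) := hMc.continuousAt hB
  have hxt : Tendsto (fun τ : ℝ => Real.exp ((2 * n + 1) * s) - τ)
      (nhds (Real.exp ((2 * n + 1) * s))) (nhds 0) := by
    have hcont : Continuous (fun τ : ℝ => Real.exp ((2 * n + 1) * s) - τ) :=
      continuous_const.sub continuous_id
    have h := hcont.tendsto (Real.exp ((2 * n + 1) * s))
    simpa using h
  have hD : Tendsto (fun τ : ℝ => 1 + (Real.exp ((2 * n + 1) * s) - τ) * Mf τ)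
      (nhds (Real.exp ((2 * n + 1) * s))) (nhds 1) := by
    have h := (tendsto_const_nhds (x := (1:ℝ))).add (hxt.mul hMt)
    simpa using h
  have hF : Tendsto
      (fun τ : ℝ => Nf τ / (1 + (Real.exp ((2 * n + 1) * s) - τ) * Mf τ))
      (nhds (Real.exp ((2 * n + 1) * s))) (nhds (Nf (Real.exp ((2 * n + 1) * s)))) := by
    have h := hNt.div hD one_ne_zero
    rw [div_one] at h
    exact h
  refine ⟨Nf (Real.exp ((2 * n + 1) * s)), ?_⟩
  apply Filter.Tendsto.congr' _ (hF.mono_left nhdsWithin_le_nhds)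
  filter_upwards [self_mem_nhdsWithin, mem_nhdsWithin_of_mem_nhds hB] with τ hτS hτB
  obtain ⟨hτgt, hτne, hτg⟩ := hτS
  have hx : Real.exp ((2 * n + 1) * s) - τ ≠ 0 := sub_ne_zero.mpr (hτne n).symm
  have hdenk : ∀ k : ℕ, Real.exp ((2 * k + 1) * s) - τ ≠ 0 :=
    fun k => sub_ne_zero.mpr (hτne k).symm
  have hMs : Summable (fun k : ℕ =>
      (if k = n then (0:ℝ) else 1 / (Real.exp ((2 * k + 1) * s) - τ))) :=
    Summable.of_norm_bounded hu (fun k => hboundM k τ hτB)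
  have hNs : Summable (fun k : ℕ =>
      (2 * (n : ℝ) - 2 * k) / (Real.exp ((2 * k + 1) * s) - τ)) :=
    Summable.of_norm_bounded hu (fun k => hboundN k τ hτB)
  have hδs : Summable (fun k : ℕ =>
      (if k = n then 1 / (Real.exp ((2 * n + 1) * s) - τ) else (0:ℝ))) :=
    summable_of_ne_finset_zero (s := {n}) (fun b hb => if_neg (by simpa using hb))
  have hsplit : ∀ k : ℕ, 1 / (Real.exp ((2 * k + 1) * s) - τ) =
      (if k = n then (0:ℝ) else 1 / (Real.exp ((2 * k + 1) * s) - τ)) +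
      (if k = n then 1 / (Real.exp ((2 * n + 1) * s) - τ) else (0:ℝ)) := by
    intro k
    by_cases h : k = n <;> simp [h]
  have hgs : Summable (fun k : ℕ => 1 / (Real.exp ((2 * k + 1) * s) - τ)) := by
    apply (hMs.add hδs).congr
    intro k
    exact (hsplit k).symm
  have hgval : (∑' k : ℕ, 1 / (Real.exp ((2 * k + 1) * s) - τ)) =
      Mf τ + 1 / (Real.exp ((2 * n + 1) * s) - τ) := by
    rw [tsum_congr hsplit, Summable.tsum_add hMs hδs, tsum_ite_eq]
  have hfval : (∑' k : ℕ, (2 * (k : ℝ) + 1) / (Real.exp ((2 * k + 1) * s) - τ)) =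
      (2 * (n : ℝ) + 1) * (∑' k : ℕ, 1 / (Real.exp ((2 * k + 1) * s) - τ)) - Nf τ := by
    have h1 : ∀ k : ℕ, (2 * (k : ℝ) + 1) / (Real.exp ((2 * k + 1) * s) - τ) =
        (2 * (n : ℝ) + 1) * (1 / (Real.exp ((2 * k + 1) * s) - τ)) -
        (2 * (n : ℝ) - 2 * k) / (Real.exp ((2 * k + 1) * s) - τ) := by
      intro k
      field_simp
      ring
    rw [tsum_congr h1, Summable.tsum_sub (hgs.mul_left _) hNs, tsum_mul_left]
  have hgx : 1 + (Real.exp ((2 * n + 1) * s) - τ) * Mf τ =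
      (Real.exp ((2 * n + 1) * s) - τ) *
        (∑' k : ℕ, 1 / (Real.exp ((2 * k + 1) * s) - τ)) := by
    rw [hgval]
    field_simp
    ring
  rw [hgx, hfval]
  generalize (∑' k : ℕ, 1 / (Real.exp ((2 * k + 1) * s) - τ)) = g at hτg ⊢
  field_simp
  ring
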